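/- For every natural number n, the number of hyperbinary representations of n equals the (n+1)-st term of Stern's diatomic sequence; that is, h(n) = c(n+1). -/

import Mathlib

/-- Stern's diatomic sequence: `c 0 = 0`, `c 1 = 1`, `c (2m) = c m`,
`c (2m+1) = c m + c (m+1)`. -/
def stern : ℕ → ℕ
  | 0 => 0
  | 1 => 1
  | n + 2 =>
    if h : n % 2 = 0 then stern (n / 2 + 1)
    else stern (n / 2 + 1) + stern (n / 2 + 2)
decreasing_by all_goals omega

/-- Number of hyperbinary representations of the natural number `m`. -/
noncomputable def numHyper (m : ℕ) : ℕ :=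
  Nat.card {d : ℕ →₀ ℕ // (∀ j, d j ≤ 2) ∧ m = d.sum fun j a => a * 2 ^ j}

abbrev HB (m : ℕ) := {d : ℕ →₀ ℕ // (∀ j, d j ≤ 2) ∧ m = d.sum fun j a => a * 2 ^ j}

noncomputable def tailF (d : ℕ →₀ ℕ) : ℕ →₀ ℕ :=
  d.comapDomain Nat.succ (Nat.succ_injective.injOn)

noncomputable def consF (a : ℕ) (e : ℕ →₀ ℕ) : ℕ →₀ ℕ :=
  Finsupp.single 0 a + e.mapDomain Nat.succ

@[simp] lemma tailF_apply (d : ℕ →₀ ℕ) (j : ℕ) : tailF d j = d (j + 1) := rfl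

@[simp] lemma consF_zero (a : ℕ) (e : ℕ →₀ ℕ) : consF a e 0 = a := by
  simp [consF, Finsupp.mapDomain_notin_range (f := Nat.succ) e 0 (by simp [Set.range])]

@[simp] lemma consF_succ (a : ℕ) (e : ℕ →₀ ℕ) (j : ℕ) : consF a e (j + 1) = e j := by
  simp [consF, Finsupp.mapDomain_apply Nat.succ_injective]

@[simp] lemma tailF_consF (a : ℕ) (e : ℕ →₀ ℕ) : tailF (consF a e) = e := by
  ext j; simp

lemma consF_tailF (d : ℕ →₀ ℕ) : consF (d 0) (tailF d) = d := by
  ext j; cases j <;> simp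

lemma erase_eq_mapDomain (d : ℕ →₀ ℕ) :
    Finsupp.erase 0 d = (tailF d).mapDomain Nat.succ := by
  ext j
  cases j with
  | zero => simp [Finsupp.mapDomain_notin_range (f := Nat.succ) _ 0 (by simp [Set.range])]
  | succ k => simp [Finsupp.mapDomain_apply Nat.succ_injective]

lemma sum_split (d : ℕ →₀ ℕ) :
    (d.sum fun j a => a * 2 ^ j) = d 0 + 2 * ((tailF d).sum fun j a => a * 2 ^ j) := by
  conv_lhs => rw [← Finsupp.single_add_erase 0 d]
  rw [Finsupp.sum_add_index' (by simp) (fun a b₁ b₂ => by ring),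
    Finsupp.sum_single_index (by simp), erase_eq_mapDomain,
    Finsupp.sum_mapDomain_index (by simp) (fun a b₁ b₂ => by ring), Finsupp.mul_sum]
  simp only [pow_zero, mul_one]
  congr 1
  refine Finsupp.sum_congr fun j _ => ?_
  rw [pow_succ]; ring

instance : Unique (HB 0) where
  default := ⟨0, fun j => by simp, by simp⟩
  uniq := by
    rintro ⟨d, hb, hs⟩
    ext j
    simp only [Finsupp.coe_zero, Pi.zero_apply]
    by_contra h
    have hj : j ∈ d.support := Finsupp.mem_support_iff.mpr h
    have : d j * 2 ^ j ≤ ∑ x ∈ d.support, d x * 2 ^ x :=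
      Finset.single_le_sum (f := fun x => d x * 2 ^ x) (fun i _ => Nat.zero_le _) hj
    rw [Finsupp.sum] at hs
    have hp : 0 < 2 ^ j := Nat.two_pow_pos j
    have h1 : 0 < d j * 2 ^ j := Nat.mul_pos (by omega) hp
    omega

noncomputable def oddEquiv (m : ℕ) : HB (2 * m + 1) ≃ HB m where
  toFun d := ⟨tailF d.1, fun j => d.2.1 _, by
    have := d.2.2
    rw [sum_split] at this
    have h0 := d.2.1 0
    omega⟩
  invFun e := ⟨consF 1 e.1, fun j => by cases j <;> simp [e.2.1], by
    rw [sum_split]; simp [← e.2.2]; ring⟩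
  left_inv d := by
    apply Subtype.ext
    have := d.2.2
    rw [sum_split] at this
    have h0 := d.2.1 0
    have h1 : d.1 0 = 1 := by omega
    have hc := consF_tailF d.1
    rw [h1] at hc
    exact hc
  right_inv e := by apply Subtype.ext; simp

noncomputable def evenEquiv (m : ℕ) : HB (2 * m + 2) ≃ (HB (m + 1) ⊕ HB m) where
  toFun d :=
    if h : d.1 0 = 0 then
      Sum.inl ⟨tailF d.1, fun j => d.2.1 _, by
        have := d.2.2; rw [sum_split] at this; omega⟩
    else
      Sum.inr ⟨tailF d.1, fun j => d.2.1 _, by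
        have := d.2.2; rw [sum_split] at this
        have h0 := d.2.1 0
        have h2 : d.1 0 = 2 := by omega
        omega⟩
  invFun e :=
    match e with
    | Sum.inl e => ⟨consF 0 e.1, fun j => by cases j <;> simp [e.2.1], by
        rw [sum_split]; simp [← e.2.2]; ring⟩
    | Sum.inr e => ⟨consF 2 e.1, fun j => by cases j <;> simp [e.2.1], by
        rw [sum_split]; simp [← e.2.2]; ring⟩
  left_inv d := by
    have hs := d.2.2
    rw [sum_split] at hs
    have h0 := d.2.1 0
    by_cases h : d.1 0 = 0
    · simp only [h, dif_pos]
      apply Subtype.ext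
      have hc := consF_tailF d.1
      rwa [h] at hc
    · simp only [h, dif_neg, not_false_iff]
      apply Subtype.ext
      have h2 : d.1 0 = 2 := by omega
      have hc := consF_tailF d.1
      rwa [h2] at hc
  right_inv e := by
    rcases e with e | e
    · dsimp only
      rw [dif_pos (by simp)]
      exact congrArg Sum.inl (Subtype.ext (by simp))
    · dsimp only
      rw [dif_neg (by simp)]
      exact congrArg Sum.inr (Subtype.ext (by simp))

lemma finHB : ∀ m, Finite (HB m) := by
  intro m
  induction m using Nat.strong_induction_on with
  | _ m ih =>
    match m with
    | 0 => infer_instance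
    | (m + 1) =>
      rcases Nat.even_or_odd (m + 1) with ⟨r, hr⟩ | ⟨r, hr⟩
      · have h1 : m + 1 = 2 * (r - 1) + 2 := by omega
        rw [h1]
        have f1 : Finite (HB (r - 1 + 1)) := by
          rw [show r - 1 + 1 = r by omega]; exact ih r (by omega)
        have f2 := ih (r - 1) (by omega)
        exact Finite.of_equiv _ (evenEquiv (r - 1)).symm
      · rw [hr]
        have f1 := ih r (by omega)
        exact Finite.of_equiv _ (oddEquiv r).symm

theorem numHyper_zero : numHyper 0 = 1 := Nat.card_unique

theorem numHyper_odd (m : ℕ) : numHyper (2 * m + 1) = numHyper m :=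
  Nat.card_congr (oddEquiv m)

theorem numHyper_even (m : ℕ) : numHyper (2 * m + 2) = numHyper (m + 1) + numHyper m := by
  have := finHB (m + 1)
  have := finHB m
  rw [show numHyper (2 * m + 2) = Nat.card (HB (2 * m + 2)) from rfl,
    Nat.card_congr (evenEquiv m), Nat.card_sum]
  rfl

theorem hyper_eq_stern' (n : ℕ) : numHyper n = stern (n + 1) := by
  induction n using Nat.strong_induction_on with
  | _ n ih =>
    match n with
    | 0 => rw [numHyper_zero]; simp [stern]
    | (n + 1) =>
      rcases Nat.even_or_odd (n + 1) with ⟨r, hr⟩ | ⟨r, hr⟩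
      · have h1 : n + 1 = 2 * (r - 1) + 2 := by omega
        rw [h1, numHyper_even, show r - 1 + 1 = r by omega, ih r (by omega), ih (r - 1) (by omega)]
        rw [show 2 * (r - 1) + 2 + 1 = (2 * (r - 1) + 1) + 2 from rfl, stern]
        have : (2 * (r - 1) + 1) % 2 = 1 := by omega
        rw [dif_neg (by omega)]
        have h2 : (2 * (r - 1) + 1) / 2 = r - 1 := by omega
        rw [h2, show r - 1 + 1 = r by omega, show r - 1 + 2 = r + 1 by omega]
        omega
      · rw [hr, numHyper_odd, ih r (by omega)]
        rw [show 2 * r + 1 + 1 = 2 * r + 2 from rfl, stern]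
        rw [dif_pos (by omega)]
        congr 1
        omega

theorem hyper_eq_stern (n : ℕ) : numHyper n = stern (n + 1) := hyper_eq_stern' n
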